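/- For y > 0 and z complex with 1 - 4z not a nonpositive real (so the square root is well defined), the infinite product ∏_{k=0}^{∞} (1 + z/((y+k)(y+k+1))) converges and equals Γ(y)Γ(y+1) / (Γ(1/2 + y - (1/2)√(1-4z)) Γ(1/2 + y + (1/2)√(1-4z))). -/

import Mathlib

open Classical

open Complex Filter Finset Topology in
theorem prod_gamma_identity (y : ℝ) (hy : 0 < y) (z : ℂ)
    (hz : ∀ t : ℝ, t ≤ 0 → 1 - 4 * z ≠ (t : ℂ)) :
    HasProd (fun k : ℕ => 1 + z / (((y : ℂ) + k) * ((y : ℂ) + k + 1)))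
      (Complex.Gamma y * Complex.Gamma (y + 1) /
        (Complex.Gamma (1 / 2 + y - (1 - 4 * z) ^ ((1 : ℂ) / 2) / 2) *
          Complex.Gamma (1 / 2 + y + (1 - 4 * z) ^ ((1 : ℂ) / 2) / 2))) := by
  set f : ℕ → ℂ := fun k : ℕ => 1 + z / (((y : ℂ) + k) * ((y : ℂ) + k + 1)) with hf
  set s : ℂ := (1 - 4 * z) ^ ((1 : ℂ) / 2) with hsdef
  set a : ℂ := 1 / 2 + y - s / 2 with hadef
  set b : ℂ := 1 / 2 + y + s / 2 with hbdef
  -- basic facts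
  have hs2 : s ^ 2 = 1 - 4 * z := by
    rw [hsdef, one_div]
    exact_mod_cast Complex.cpow_ofNat_inv_pow _ 2
  have hsre : 0 < s.re := by
    rw [hsdef, one_div, Complex.cpow_inv_two_re]
    apply Real.sqrt_pos.mpr
    have hw0 : (1 - 4*z) ≠ 0 := by simpa using hz 0 le_rfl
    have h1 : -(1-4*z).re < ‖1-4*z‖ := by
      rcases le_or_gt 0 (1-4*z).re with h | h
      · linarith [norm_pos_iff.mpr hw0]
      · have him : (1-4*z).im ≠ 0 := by
          intro h0
          exact hz (1-4*z).re h.le (Complex.ext (by simp) (by simp [h0])).symm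
        have := Complex.abs_re_lt_norm.mpr him
        rw [abs_lt] at this
        linarith [this.1]
    linarith
  have hyk : ∀ k : ℕ, (y:ℂ) + k ≠ 0 := by
    intro k h
    have := congrArg Complex.re h
    simp only [Complex.add_re, Complex.ofReal_re, Complex.natCast_re, Complex.zero_re] at this
    have : (0:ℝ) < y + k := by positivity
    linarith
  have hyk1 : ∀ k : ℕ, (y:ℂ) + k + 1 ≠ 0 := by
    intro k h
    have := congrArg Complex.re h
    simp only [Complex.add_re, Complex.ofReal_re, Complex.natCast_re, Complex.one_re,
      Complex.zero_re] at this
    have : (0:ℝ) < y + k + 1 := by positivity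
    linarith
  have hy1k : ∀ k : ℕ, (y:ℂ) + 1 + k ≠ 0 := by
    intro k
    have := hyk1 k
    rwa [show (y:ℂ) + k + 1 = (y:ℂ) + 1 + k by ring] at this
  have hD : ∀ k : ℕ, ((y:ℂ)+k) * ((y:ℂ)+k+1) ≠ 0 := fun k => mul_ne_zero (hyk k) (hyk1 k)
  have hbk : ∀ k : ℕ, b + k ≠ 0 := by
    intro k h
    have := congrArg Complex.re h
    simp only [hbdef, Complex.add_re, Complex.sub_re, Complex.ofReal_re, Complex.natCast_re,
      Complex.zero_re, Complex.div_ofNat_re, Complex.one_re] at this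
    linarith [hsre, hy, Nat.cast_nonneg (α := ℝ) k]
  have hfk : ∀ k : ℕ, f k = (a + k) * (b + k) / (((y:ℂ)+k) * ((y:ℂ)+k+1)) := by
    intro k
    have hnum : (a + k) * (b + k) = ((y:ℂ)+k)*((y:ℂ)+k+1) + z := by
      rw [hadef, hbdef]
      linear_combination (-(1:ℂ)/4) * hs2
    rw [hf, hnum, add_div, div_self (hD k)]
  by_cases ha : ∀ k : ℕ, a + k ≠ 0
  · -- main case
    have hak := ha
    have hfne : ∀ k : ℕ, f k ≠ 0 := fun k => by
      rw [hfk k]; exact div_ne_zero (mul_ne_zero (hak k) (hbk k)) (hD k)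
    -- key identity for partial products
    have key : ∀ n : ℕ, n ≠ 0 → (∏ k ∈ Finset.range (n+1), f k) =
        GammaSeq y n * GammaSeq ((y:ℂ)+1) n / (GammaSeq a n * GammaSeq b n) := by
      intro n hn
      have hab : a + b = 2*(y:ℂ)+1 := by rw [hadef, hbdef]; ring
      have hpow : (n:ℂ)^(y:ℂ) * (n:ℂ)^((y:ℂ)+1) = (n:ℂ)^a * (n:ℂ)^b := by
        rw [← cpow_add _ _ (Nat.cast_ne_zero.mpr hn), ← cpow_add _ _ (Nat.cast_ne_zero.mpr hn)]
        congr 1; linear_combination -hab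
      have hfeq : (∏ k ∈ Finset.range (n+1), f k) =
          ∏ k ∈ Finset.range (n+1), ((a+k)*(b+k)/(((y:ℂ)+k)*((y:ℂ)+k+1))) :=
        Finset.prod_congr rfl fun k _ => hfk k
      rw [hfeq]
      simp only [GammaSeq]
      rw [prod_div_distrib, prod_mul_distrib]
      have h1 : ∏ k ∈ range (n+1), ((y:ℂ)+k)*((y:ℂ)+k+1)
          = (∏ k ∈ range (n+1), ((y:ℂ)+k)) * ∏ k ∈ range (n+1), ((y:ℂ)+1+k) := by
        rw [← prod_mul_distrib]
        exact prod_congr rfl fun k _ => by ring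
      rw [h1]
      have pa : (∏ k ∈ range (n+1), (a + (k:ℂ))) ≠ 0 := prod_ne_zero_iff.mpr (fun k _ => hak k)
      have pb : (∏ k ∈ range (n+1), (b + (k:ℂ))) ≠ 0 := prod_ne_zero_iff.mpr (fun k _ => hbk k)
      have py : (∏ k ∈ range (n+1), ((y:ℂ) + (k:ℂ))) ≠ 0 := prod_ne_zero_iff.mpr (fun k _ => hyk k)
      have py1 : (∏ k ∈ range (n+1), ((y:ℂ) + 1 + (k:ℂ))) ≠ 0 :=
        prod_ne_zero_iff.mpr (fun k _ => hy1k k)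
      have hnz : (n:ℂ) ≠ 0 := Nat.cast_ne_zero.mpr hn
      have c1 : ((n:ℂ)^(y:ℂ)) ≠ 0 := fun h => hnz ((cpow_eq_zero_iff _ _).mp h).1
      have c2 : ((n:ℂ)^((y:ℂ)+1)) ≠ 0 := fun h => hnz ((cpow_eq_zero_iff _ _).mp h).1
      have c3 : ((n:ℂ)^a) ≠ 0 := fun h => hnz ((cpow_eq_zero_iff _ _).mp h).1
      have c4 : ((n:ℂ)^b) ≠ 0 := fun h => hnz ((cpow_eq_zero_iff _ _).mp h).1
      have cf : ((n.factorial :ℂ)) ≠ 0 := Nat.cast_ne_zero.mpr n.factorial_ne_zero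
      field_simp
      linear_combination (-1:ℂ) * hpow
    -- Gamma nonvanishing
    have hGa : Complex.Gamma a ≠ 0 := by
      apply Complex.Gamma_ne_zero
      intro m h
      exact hak m (by rw [h]; ring)
    have hGb : Complex.Gamma b ≠ 0 := by
      apply Complex.Gamma_ne_zero_of_re_pos
      rw [hbdef]
      simp only [Complex.add_re, Complex.ofReal_re, Complex.div_ofNat_re, Complex.one_re]
      linarith [hsre, hy]
    -- limit
    have hlim : Tendsto (fun n => ∏ k ∈ Finset.range (n+1), f k) atTop
        (𝓝 (Complex.Gamma y * Complex.Gamma ((y:ℂ)+1) / (Complex.Gamma a * Complex.Gamma b))) := by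
      have h1 : Tendsto (fun n => GammaSeq y n * GammaSeq ((y:ℂ)+1) n /
          (GammaSeq a n * GammaSeq b n)) atTop
          (𝓝 (Complex.Gamma y * Complex.Gamma ((y:ℂ)+1) / (Complex.Gamma a * Complex.Gamma b))) :=
        Tendsto.div ((GammaSeq_tendsto_Gamma y).mul (GammaSeq_tendsto_Gamma ((y:ℂ)+1)))
          ((GammaSeq_tendsto_Gamma a).mul (GammaSeq_tendsto_Gamma b)) (mul_ne_zero hGa hGb)
      apply h1.congr'
      filter_upwards [eventually_ge_atTop 1] with n hn
      exact (key n (by omega)).symm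
    -- multipliability
    have hC : 0 < min y 1 := lt_min hy one_pos
    have hgsum : Summable (fun n : ℕ => ‖z‖ / (min y 1 * ((n:ℝ)+1)^2)) := by
      have hbase : Summable (fun n : ℕ => (‖z‖ / min y 1) * (1 / ((n:ℝ)+1)^2)) := by
        apply Summable.mul_left
        have h2 : Summable (fun n : ℕ => 1 / ((n:ℝ))^2) :=
          Real.summable_one_div_nat_pow.mpr one_lt_two
        have := (summable_nat_add_iff 1).mpr h2
        simpa using this
      apply hbase.congr
      intro n
      have h1 : ((n:ℝ)+1)^2 ≠ 0 := by positivity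
      field_simp
    have hwle : ∀ n : ℕ, ‖z / (((y:ℂ)+n) * ((y:ℂ)+n+1))‖ ≤ ‖z‖ / (min y 1 * ((n:ℝ)+1)^2) := by
      intro n
      have hnormw : ‖z / (((y:ℂ)+n) * ((y:ℂ)+n+1))‖ = ‖z‖ / ((y+n)*(y+n+1)) := by
        rw [norm_div]
        congr 1
        have hcast : (((y:ℂ)+n) * ((y:ℂ)+n+1)) = ((((y+n)*(y+n+1) : ℝ)) : ℂ) := by push_cast; ring
        rw [hcast, Complex.norm_real, Real.norm_eq_abs, abs_of_pos (by positivity)]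
      rw [hnormw]
      apply div_le_div_of_nonneg_left (norm_nonneg z) (by positivity)
      have h1 : min y 1 * ((n:ℝ)+1) ≤ y + n := by
        rcases min_cases y 1 with ⟨h, hle⟩ | ⟨h, hle⟩ <;> rw [h] <;>
          nlinarith [Nat.cast_nonneg (α := ℝ) n]
      nlinarith [Nat.cast_nonneg (α := ℝ) n, hC]
    have hwsum : Summable (fun n : ℕ => ‖z / (((y:ℂ)+n) * ((y:ℂ)+n+1))‖) :=
      Summable.of_nonneg_of_le (fun n => norm_nonneg _) hwle hgsum
    have htend : Tendsto (fun n : ℕ => ‖z / (((y:ℂ)+n) * ((y:ℂ)+n+1))‖) atTop (𝓝 0) :=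
      hwsum.tendsto_atTop_zero
    have hlog : Summable (fun n : ℕ => Complex.log (f n)) := by
      apply Summable.of_norm_bounded_eventually_nat
        (g := fun n => 3/2 * (‖z‖ / (min y 1 * ((n:ℝ)+1)^2))) (hgsum.mul_left _)
      have hev : ∀ᶠ n : ℕ in atTop, ‖z / (((y:ℂ)+n) * ((y:ℂ)+n+1))‖ < 1/2 :=
        htend.eventually (gt_mem_nhds (by norm_num))
      filter_upwards [hev] with n hn
      have h1 : ‖Complex.log (f n)‖ ≤ 3/2 * ‖z / (((y:ℂ)+n) * ((y:ℂ)+n+1))‖ := by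
        rw [hf]
        exact Complex.norm_log_one_add_half_le_self hn.le
      calc ‖Complex.log (f n)‖ ≤ 3/2 * ‖z / (((y:ℂ)+n) * ((y:ℂ)+n+1))‖ := h1
        _ ≤ 3/2 * (‖z‖ / (min y 1 * ((n:ℝ)+1)^2)) := by
            exact mul_le_mul_of_nonneg_left (hwle n) (by norm_num)
    have hmult : Multipliable f :=
      Complex.multipliable_of_summable_log hlog
    rw [hmult.hasProd_iff_tendsto_nat]
    exact (tendsto_add_atTop_iff_nat 1).mp hlim
  · -- degenerate case: a is a nonpositive integer, both sides zero
    push_neg at ha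
    obtain ⟨m, hm⟩ := ha
    have haeq : a = -(m:ℂ) := by linear_combination hm
    have hfm : f m = 0 := by rw [hfk m, hm, zero_mul, zero_div]
    have h0 : HasProd f 0 := by
      rw [HasProd]
      apply Tendsto.congr' _ tendsto_const_nhds
      filter_upwards [eventually_ge_atTop ({m} : Finset ℕ)] with t ht
      exact (Finset.prod_eq_zero (Finset.singleton_subset_iff.mp ht) hfm).symm
    rw [show Complex.Gamma (1 / 2 + y - (1 - 4 * z) ^ ((1 : ℂ) / 2) / 2) = Complex.Gamma a from rfl,
      haeq, Complex.Gamma_neg_nat_eq_zero, zero_mul, div_zero]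
    exact h0
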